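/- Let G and H be simple graphs of orders n₁ and n₂ with minimum degrees δ(G) ≥ 2 and δ(H) ≥ 2. Then the global clustering coefficient of G × H is Cc(G × H) = (1/(n₁n₂)) · Σ_{u ∈ V(G)} Σ_{v ∈ V(H)} f(u,v) · Cc_u(G) · Cc_v(H), where f(u,v) = (deg_G(u) − 1)(deg_H(v) − 1)/(deg_G(u)·deg_H(v) − 1). -/

import Mathlib

variable {α β : Type*}

/-- Tensor (categorical) product of simple graphs. -/
def tensorProdG (G : SimpleGraph α) (H : SimpleGraph β) : SimpleGraph (α × β) where
  Adj x y := G.Adj x.1 y.1 ∧ H.Adj x.2 y.2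
  symm := ⟨fun _ _ h => ⟨h.1.symm, h.2.symm⟩⟩
  loopless := ⟨fun x h => G.loopless.irrefl x.1 h.1⟩

instance (G : SimpleGraph α) (H : SimpleGraph β) [DecidableRel G.Adj] [DecidableRel H.Adj] :
    DecidableRel (tensorProdG G H).Adj := fun _ _ => instDecidableAnd

/-- Number of triangles incident to `u`: edges of the induced neighborhood. -/
noncomputable def triCount (G : SimpleGraph α) [Fintype α] (u : α) : ℕ :=
  Nat.card (SimpleGraph.induce (G.neighborSet u) G).edgeSet

/-- Local clustering coefficient. -/
noncomputable def locCc (G : SimpleGraph α) [Fintype α] [DecidableRel G.Adj] (u : α) : ℝ :=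
  if 2 ≤ G.degree u then (triCount G u : ℝ) / ((G.degree u).choose 2) else 0

/-- Global clustering coefficient. -/
noncomputable def globCc (G : SimpleGraph α) [Fintype α] [DecidableRel G.Adj] : ℝ :=
  (∑ v, locCc G v) / (Fintype.card α)

/-- Minimum degree of the induced neighborhood of `u`. -/
noncomputable def nbrMinDeg (G : SimpleGraph α) [Fintype α] [DecidableRel G.Adj] (u : α) : ℕ :=
  (SimpleGraph.induce (G.neighborSet u) G).minDegree

/-- Average degree, as a real number. -/
noncomputable def avgDeg (G : SimpleGraph α) [Fintype α] [DecidableRel G.Adj] : ℝ :=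
  (∑ v, (G.degree v : ℝ)) / (Fintype.card α)

/-- Darts of a tensor product correspond to pairs of darts. -/
def tensorDartEquiv (G : SimpleGraph α) (H : SimpleGraph β) :
    (tensorProdG G H).Dart ≃ G.Dart × H.Dart where
  toFun d := (⟨(d.toProd.1.1, d.toProd.2.1), d.adj.1⟩, ⟨(d.toProd.1.2, d.toProd.2.2), d.adj.2⟩)
  invFun p := ⟨((p.1.toProd.1, p.2.toProd.1), (p.1.toProd.2, p.2.toProd.2)), ⟨p.1.adj, p.2.adj⟩⟩
  left_inv d := rfl
  right_inv p := rfl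

/-- Generic dart/edge count relation via `Nat.card`. -/
lemma natCard_dart {V : Type*} (G : SimpleGraph V) [Fintype V] :
    Nat.card G.Dart = 2 * Nat.card G.edgeSet := by
  classical
  rw [Nat.card_eq_fintype_card, Nat.card_eq_fintype_card,
    SimpleGraph.dart_card_eq_twice_card_edges, SimpleGraph.edgeFinset, Set.toFinset_card]

/-- Neighborhood equivalence in the tensor product. -/
def tensorNbhdEquiv (G : SimpleGraph α) (H : SimpleGraph β) (u : α) (v : β) :
    ((tensorProdG G H).neighborSet (u, v)) ≃ (G.neighborSet u) × (H.neighborSet v) where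
  toFun x := (⟨x.1.1, x.2.1⟩, ⟨x.1.2, x.2.2⟩)
  invFun p := ⟨(p.1.1, p.2.1), p.1.2, p.2.2⟩
  left_inv x := rfl
  right_inv p := rfl

/-- The induced neighborhood of the tensor product is isomorphic to the tensor
product of the induced neighborhoods. -/
def tensorNbhdIso (G : SimpleGraph α) (H : SimpleGraph β) (u : α) (v : β) :
    (SimpleGraph.induce ((tensorProdG G H).neighborSet (u, v)) (tensorProdG G H)) ≃g
      tensorProdG (SimpleGraph.induce (G.neighborSet u) G)
        (SimpleGraph.induce (H.neighborSet v) H) :=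
  ⟨tensorNbhdEquiv G H u v, Iff.rfl⟩

variable [Fintype α] [Fintype β] (G : SimpleGraph α) (H : SimpleGraph β)
  [DecidableRel G.Adj] [DecidableRel H.Adj]

lemma tensor_degree (u : α) (v : β) :
    (tensorProdG G H).degree (u, v) = G.degree u * H.degree v := by
  rw [← SimpleGraph.card_neighborSet_eq_degree, ← SimpleGraph.card_neighborSet_eq_degree,
    ← SimpleGraph.card_neighborSet_eq_degree, ← Nat.card_eq_fintype_card,
    ← Nat.card_eq_fintype_card, ← Nat.card_eq_fintype_card,
    Nat.card_congr (tensorNbhdEquiv G H u v), Nat.card_prod]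

lemma tensor_triCount (u : α) (v : β) :
    triCount (tensorProdG G H) (u, v) = 2 * (triCount G u * triCount H v) := by
  have h1 : 2 * triCount (tensorProdG G H) (u, v) =
      Nat.card (tensorProdG (SimpleGraph.induce (G.neighborSet u) G)
        (SimpleGraph.induce (H.neighborSet v) H)).Dart := by
    rw [natCard_dart, triCount,
      Nat.card_congr (tensorNbhdIso G H u v).mapEdgeSet]
  have h2 : Nat.card (tensorProdG (SimpleGraph.induce (G.neighborSet u) G)
        (SimpleGraph.induce (H.neighborSet v) H)).Dart
      = (2 * triCount G u) * (2 * triCount H v) := by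
    rw [Nat.card_congr (tensorDartEquiv _ _), Nat.card_prod, natCard_dart, natCard_dart]
    rfl
  rw [h2, show 2 * triCount G u * (2 * triCount H v) = 2 * (2 * (triCount G u * triCount H v)) by ring] at h1
  omega

theorem tensor_globCc (hG : ∀ u : α, 2 ≤ G.degree u) (hH : ∀ v : β, 2 ≤ H.degree v) :
    globCc (tensorProdG G H) =
      (1 / ((Fintype.card α : ℝ) * (Fintype.card β : ℝ))) *
        ∑ u : α, ∑ v : β,
          (((G.degree u : ℝ) - 1) * ((H.degree v : ℝ) - 1) / ((G.degree u : ℝ) * (H.degree v : ℝ) - 1)) * locCc G u * locCc H v := by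
  rw [globCc, Fintype.card_prod, Fintype.sum_prod_type]
  push_cast
  rw [div_eq_mul_inv, mul_comm, ← one_div]
  congr 1
  refine Finset.sum_congr rfl fun u _ => Finset.sum_congr rfl fun v _ => ?_
  have hd1 : 2 ≤ G.degree u := hG u
  have hd2 : 2 ≤ H.degree v := hH v
  have hdeg : (tensorProdG G H).degree (u, v) = G.degree u * H.degree v :=
    tensor_degree G H u v
  have hdd : 2 ≤ (tensorProdG G H).degree (u, v) := by rw [hdeg]; nlinarith
  rw [locCc, locCc, locCc, if_pos hdd, if_pos hd1, if_pos hd2, tensor_triCount, hdeg]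
  have c1 : (G.degree u : ℝ) ≠ 0 := by positivity
  have c2 : (H.degree v : ℝ) ≠ 0 := by positivity
  have c3 : (G.degree u : ℝ) - 1 ≠ 0 := by
    have : (2 : ℝ) ≤ (G.degree u : ℝ) := by exact_mod_cast hd1
    nlinarith
  have c4 : (H.degree v : ℝ) - 1 ≠ 0 := by
    have : (2 : ℝ) ≤ (H.degree v : ℝ) := by exact_mod_cast hd2
    nlinarith
  have c5 : (G.degree u : ℝ) * (H.degree v : ℝ) - 1 ≠ 0 := by
    have h1 : (2 : ℝ) ≤ (G.degree u : ℝ) := by exact_mod_cast hd1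
    have h2 : (2 : ℝ) ≤ (H.degree v : ℝ) := by exact_mod_cast hd2
    nlinarith
  rw [Nat.cast_choose_two, Nat.cast_choose_two, Nat.cast_choose_two]
  push_cast
  field_simp
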